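/- arXiv:1411.3754 — 5 statements merged into one kernel-verified Lean document; each statement's English description precedes it below -/
import Mathlib

section
/- Let ρ be a density matrix and H a Hermitian matrix on ℂⁿ. Let p↑ be the eigenvalues of ρ in non-decreasing order and λ↓ the eigenvalues of H in non-increasing order. Then there exists a Hermitian H* that is unitarily equivalent to H, commutes with ρ, and satisfies Tr(ρ H*) = Σᵢ p↑ᵢ λ↓ᵢ ≤ Tr(ρ U H U†) for every unitary U. In particular, the minimum of Tr(ρ H') over the unitary orbit of H is achieved by a Hamiltonian diagonal in an eigenbasis of ρ with eigenvalues anti-ordered relative to those of ρ. -/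
open Matrix BigOperators ComplexOrder

variable {n : Type*} [Fintype n] [DecidableEq n]

/-- Real part of the trace. -/
noncomputable def trR {m : Type*} [Fintype m] (A : Matrix m m ℂ) : ℝ := (Matrix.trace A).re

/-- The matrix `exp (-β H)`. -/
noncomputable def mexp {m : Type*} [Fintype m] [DecidableEq m] (β : ℝ) (H : Matrix m m ℂ) :
    Matrix m m ℂ := NormedSpace.exp ((-β : ℂ) • H)

/-- The Gibbs state `exp (-β H) / Tr (exp (-β H))`. -/
noncomputable def gibbs {m : Type*} [Fintype m] [DecidableEq m] (β : ℝ) (H : Matrix m m ℂ) :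
    Matrix m m ℂ := (Matrix.trace (mexp β H))⁻¹ • mexp β H

/-- Von Neumann entropy `-Tr (ρ log ρ)`, via the eigenvalues of a Hermitian matrix. -/
noncomputable def vnEntropy {m : Type*} [Fintype m] [DecidableEq m] {ρ : Matrix m m ℂ}
    (h : ρ.IsHermitian) : ℝ := -∑ i, h.eigenvalues i * Real.log (h.eigenvalues i)

/-- Free energy `F(ρ,H) = Tr(ρH) - S(ρ)/β`. -/
noncomputable def freeEnergy {m : Type*} [Fintype m] [DecidableEq m] (β : ℝ)
    (ρ H : Matrix m m ℂ) (h : ρ.IsHermitian) : ℝ := trR (ρ * H) - vnEntropy h / β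

/-- Matrix logarithm of a Hermitian matrix, via the spectral decomposition. -/
noncomputable def mlog {m : Type*} [Fintype m] [DecidableEq m] {A : Matrix m m ℂ}
    (h : A.IsHermitian) : Matrix m m ℂ :=
  (h.eigenvectorUnitary : Matrix m m ℂ) *
    Matrix.diagonal (fun i => (Real.log (h.eigenvalues i) : ℂ)) *
      (star (h.eigenvectorUnitary : Matrix m m ℂ))

/-- Quantum relative entropy `D(ρ‖σ) = Tr(ρ log ρ) - Tr(ρ log σ)`. -/
noncomputable def relEnt {m : Type*} [Fintype m] [DecidableEq m] {ρ σ : Matrix m m ℂ}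
    (hρ : ρ.IsHermitian) (hσ : σ.IsHermitian) : ℝ :=
  trR (ρ * mlog hρ) - trR (ρ * mlog hσ)


lemma aux_ds_le {m : ℕ} (p lam : Fin m → ℝ) (hp : Monotone p) (hl : Antitone lam)
    (D : Matrix (Fin m) (Fin m) ℝ) (hD : D ∈ doublyStochastic ℝ (Fin m)) :
    ∑ i, p i * lam i ≤ ∑ i, ∑ j, D i j * (p i * lam j) := by
  obtain ⟨w, hw0, hw1, hwD⟩ := exists_eq_sum_perm_of_mem_doublyStochastic hD
  have hDij : ∀ i j, D i j = ∑ σ : Equiv.Perm (Fin m), w σ * (σ.permMatrix ℝ) i j := by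
    intro i j
    rw [← hwD]
    simp [Matrix.sum_apply]
  have hperm : ∀ (σ : Equiv.Perm (Fin m)) (i : Fin m),
      ∑ j, (σ.permMatrix ℝ) i j * (p i * lam j) = p i * lam (σ i) := by
    intro σ i
    rw [Finset.sum_eq_single (σ i)]
    · simp [Equiv.Perm.permMatrix, PEquiv.toMatrix_apply, Equiv.toPEquiv_apply]
    · intro b _ hb
      simp [Equiv.Perm.permMatrix, PEquiv.toMatrix_apply, Equiv.toPEquiv_apply, Ne.symm hb]
    · simp
  have hsum : ∑ i, ∑ j, D i j * (p i * lam j)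
      = ∑ σ : Equiv.Perm (Fin m), w σ * ∑ i, p i * lam (σ i) := by
    calc ∑ i, ∑ j, D i j * (p i * lam j)
        = ∑ i, ∑ σ : Equiv.Perm (Fin m), ∑ j, w σ * ((σ.permMatrix ℝ) i j * (p i * lam j)) := by
          simp_rw [hDij, Finset.sum_mul, mul_assoc]
          exact Finset.sum_congr rfl fun i _ => Finset.sum_comm
      _ = ∑ σ : Equiv.Perm (Fin m), w σ * ∑ i, p i * lam (σ i) := by
          rw [Finset.sum_comm]
          refine Finset.sum_congr rfl fun σ _ => ?_
          rw [Finset.mul_sum]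
          exact Finset.sum_congr rfl fun i _ => by rw [← Finset.mul_sum, hperm]
  rw [hsum]
  have h1 : ∑ i, p i * lam i = ∑ σ : Equiv.Perm (Fin m), w σ * ∑ i, p i * lam i := by
    rw [← Finset.sum_mul, hw1, one_mul]
  rw [h1]
  exact Finset.sum_le_sum fun σ _ =>
    mul_le_mul_of_nonneg_left (hp.antivary hl).sum_mul_le_sum_mul_comp_perm (hw0 σ)

lemma aux_unitary_ds {m : ℕ} {N : Matrix (Fin m) (Fin m) ℂ}
    (hN : N ∈ Matrix.unitaryGroup (Fin m) ℂ) :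
    (Matrix.of fun i j => Complex.normSq (N i j)) ∈ doublyStochastic ℝ (Fin m) := by
  have h1 : N * star N = 1 := Matrix.mem_unitaryGroup_iff.mp hN
  have h2 : star N * N = 1 := Matrix.mem_unitaryGroup_iff'.mp hN
  rw [mem_doublyStochastic_iff_sum]
  refine ⟨fun i j => Complex.normSq_nonneg _, fun i => ?_, fun j => ?_⟩
  · have := congrArg (fun M => (M i i).re) h1
    simp only [Matrix.mul_apply, Matrix.star_apply, Matrix.one_apply_eq] at this
    simp only [Complex.one_re, Complex.re_sum] at this
    rw [← this]
    refine Finset.sum_congr rfl fun k _ => ?_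
    simp [Complex.mul_conj]
  · have := congrArg (fun M => (M j j).re) h2
    simp only [Matrix.mul_apply, Matrix.star_apply, Matrix.one_apply_eq] at this
    simp only [Complex.one_re, Complex.re_sum] at this
    rw [← this]
    refine Finset.sum_congr rfl fun k _ => ?_
    simp [Complex.mul_conj', Complex.normSq_apply]

lemma aux_conj_apply {m : ℕ} (M : Matrix (Fin m) (Fin m) ℂ) (d : Fin m → ℂ) (i j : Fin m) :
    (M * Matrix.diagonal d * star M) i j = ∑ k, M i k * d k * star (M j k) := by
  rw [Matrix.mul_apply]
  refine Finset.sum_congr rfl fun k _ => ?_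
  rw [Matrix.mul_diagonal, Matrix.star_eq_conjTranspose, Matrix.conjTranspose_apply]

lemma aux_trace_diag {m : ℕ} (a b : Fin m → ℝ) (N : Matrix (Fin m) (Fin m) ℂ) :
    (Matrix.trace (Matrix.diagonal (fun i => (a i : ℂ)) * N *
        Matrix.diagonal (fun i => (b i : ℂ)) * star N)).re
      = ∑ i, ∑ j, Complex.normSq (N i j) * (a i * b j) := by
  have hA : ∀ i x, (Matrix.diagonal (fun i => (a i : ℂ)) * N *
      Matrix.diagonal (fun i => (b i : ℂ))) i x = (a i : ℂ) * N i x * (b x : ℂ) := by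
    intro i x
    rw [Matrix.mul_diagonal, Matrix.diagonal_mul]
  have hB : ∀ i, (Matrix.diagonal (fun i => (a i : ℂ)) * N *
      Matrix.diagonal (fun i => (b i : ℂ)) * star N) i i
        = ∑ j, ((Complex.normSq (N i j) * (a i * b j) : ℝ) : ℂ) := by
    intro i
    rw [Matrix.mul_apply]
    refine Finset.sum_congr rfl fun j _ => ?_
    rw [hA, Matrix.star_eq_conjTranspose, Matrix.conjTranspose_apply, RCLike.star_def]
    push_cast
    rw [← Complex.mul_conj]
    ring
  rw [Matrix.trace]
  simp only [Matrix.diag_apply, hB, Complex.re_sum, Complex.ofReal_re]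

lemma aux_conj_perm {m : ℕ} (W : Matrix (Fin m) (Fin m) ℂ) (e : Equiv.Perm (Fin m))
    (c : Fin m → ℂ) :
    (W.submatrix id ⇑e) * Matrix.diagonal (c ∘ ⇑e) * star (W.submatrix id ⇑e)
      = W * Matrix.diagonal c * star W := by
  ext i j
  rw [aux_conj_apply, aux_conj_apply]
  simp only [Matrix.submatrix_apply, id_eq, Function.comp_apply]
  exact Equiv.sum_comp e (fun k => W i k * c k * star (W j k))

lemma aux_submatrix_unitary {m : ℕ} {W : Matrix (Fin m) (Fin m) ℂ}
    (hW : W ∈ Matrix.unitaryGroup (Fin m) ℂ) (e : Equiv.Perm (Fin m)) :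
    W.submatrix id ⇑e ∈ Matrix.unitaryGroup (Fin m) ℂ := by
  rw [Matrix.mem_unitaryGroup_iff]
  have h1 : W * star W = 1 := Matrix.mem_unitaryGroup_iff.mp hW
  ext i j
  have h2 := congrArg (fun M => M i j) h1
  simp only [Matrix.mul_apply, Matrix.star_eq_conjTranspose, Matrix.conjTranspose_apply] at h2 ⊢
  simp only [Matrix.submatrix_apply, id_eq]
  rw [Equiv.sum_comp e (fun k => W i k * star (W j k))]
  exact h2
lemma aux_main {m : ℕ} (ρ H : Matrix (Fin m) (Fin m) ℂ) (p lam : Fin m → ℝ)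
    (hpmono : Monotone p) (hlanti : Antitone lam)
    (V W : Matrix (Fin m) (Fin m) ℂ)
    (hVmem : V ∈ Matrix.unitaryGroup (Fin m) ℂ) (hWmem : W ∈ Matrix.unitaryGroup (Fin m) ℂ)
    (hρd : ρ = V * Matrix.diagonal (fun i => ((p i : ℝ) : ℂ)) * star V)
    (hHd : H = W * Matrix.diagonal (fun i => ((lam i : ℝ) : ℂ)) * star W) :
    ∃ Hstar : Matrix (Fin m) (Fin m) ℂ, Hstar.IsHermitian ∧
      (∃ U ∈ Matrix.unitaryGroup (Fin m) ℂ, Hstar = U * H * star U) ∧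
      ρ * Hstar = Hstar * ρ ∧
      ((ρ * Hstar).trace).re = ∑ i, p i * lam i ∧
      ∀ U ∈ Matrix.unitaryGroup (Fin m) ℂ, ∑ i, p i * lam i ≤
        ((ρ * (U * H * star U)).trace).re := by
  have hVV : star V * V = 1 := Matrix.mem_unitaryGroup_iff'.mp hVmem
  have hVV' : V * star V = 1 := Matrix.mem_unitaryGroup_iff.mp hVmem
  have hWW : star W * W = 1 := Matrix.mem_unitaryGroup_iff'.mp hWmem
  have hcancV : ∀ Z : Matrix (Fin m) (Fin m) ℂ, star V * (V * Z) = Z := fun Z => by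
    rw [← Matrix.mul_assoc, hVV, Matrix.one_mul]
  have hcancW : ∀ Z : Matrix (Fin m) (Fin m) ℂ, star W * (W * Z) = Z := fun Z => by
    rw [← Matrix.mul_assoc, hWW, Matrix.one_mul]
  have hDl : star (Matrix.diagonal (fun i => ((lam i : ℝ) : ℂ)))
      = Matrix.diagonal (fun i => ((lam i : ℝ) : ℂ)) := by
    ext i j
    rw [Matrix.star_eq_conjTranspose, Matrix.conjTranspose_apply]
    by_cases h : i = j
    · subst h; simp [Matrix.diagonal_apply_eq, Complex.conj_ofReal]
    · rw [Matrix.diagonal_apply_ne _ h, Matrix.diagonal_apply_ne _ (Ne.symm h)]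
      simp
  have key : ∀ (f g : Fin m → ℂ), (V * Matrix.diagonal f * star V) *
      (V * Matrix.diagonal g * star V) = V * Matrix.diagonal (fun i => f i * g i) * star V := by
    intro f g
    calc (V * Matrix.diagonal f * star V) * (V * Matrix.diagonal g * star V)
        = V * Matrix.diagonal f * (star V * (V * (Matrix.diagonal g * star V))) := by
          simp only [Matrix.mul_assoc]
      _ = V * Matrix.diagonal f * (Matrix.diagonal g * star V) := by rw [hcancV]
      _ = V * Matrix.diagonal f * Matrix.diagonal g * star V := by rw [← Matrix.mul_assoc]
      _ = V * Matrix.diagonal (fun i => f i * g i) * star V := by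
          rw [Matrix.mul_assoc V, Matrix.diagonal_mul_diagonal]
  refine ⟨V * Matrix.diagonal (fun i => ((lam i : ℝ) : ℂ)) * star V, ?_, ?_, ?_, ?_, ?_⟩
  · -- Hermitian
    rw [Matrix.IsHermitian, ← Matrix.star_eq_conjTranspose]
    rw [Matrix.star_mul, Matrix.star_mul, star_star, hDl, Matrix.mul_assoc]
  · -- unitarily equivalent
    refine ⟨V * star W, ?_, ?_⟩
    · exact Submonoid.mul_mem _ hVmem (Unitary.star_mem hWmem)
    · rw [hHd]
      simp only [Matrix.star_mul, star_star, Matrix.mul_assoc, hcancW]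
  · -- commutes
    rw [hρd, key, key]
    rw [show (fun i => ((p i : ℝ) : ℂ) * ((lam i : ℝ) : ℂ))
      = (fun i => ((lam i : ℝ) : ℂ) * ((p i : ℝ) : ℂ)) from funext fun i => mul_comm _ _]
  · -- trace value
    rw [hρd, key, Matrix.trace_mul_cycle, hVV, Matrix.one_mul,
      Matrix.trace_diagonal, Complex.re_sum]
    refine Finset.sum_congr rfl fun i _ => ?_
    rw [← Complex.ofReal_mul, Complex.ofReal_re]
  · -- inequality
    intro U hU
    have hNmem : star V * U * W ∈ Matrix.unitaryGroup (Fin m) ℂ :=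
      Submonoid.mul_mem _ (Submonoid.mul_mem _ (Unitary.star_mem hVmem) hU) hWmem
    have hE : Matrix.diagonal (fun i => ((p i : ℝ) : ℂ)) * (star V * U * W) *
        Matrix.diagonal (fun i => ((lam i : ℝ) : ℂ)) * star (star V * U * W)
          = star V * (ρ * (U * H * star U)) * V := by
      rw [hρd, hHd]
      simp only [Matrix.star_mul, star_star, Matrix.mul_assoc, hcancV]
    have htr : ((ρ * (U * H * star U)).trace).re
        = ∑ i, ∑ j, Complex.normSq ((star V * U * W) i j) * (p i * lam j) := by
      have hcancV2 : ∀ Z : Matrix (Fin m) (Fin m) ℂ, V * (star V * Z) = Z := fun Z => by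
        rw [← Matrix.mul_assoc, hVV', Matrix.one_mul]
      rw [← aux_trace_diag p lam (star V * U * W), hE,
        Matrix.trace_mul_comm (star V * (ρ * (U * H * star U))) V, hcancV2]
    rw [htr]
    have := aux_ds_le p lam hpmono hlanti
      (Matrix.of fun i j => Complex.normSq ((star V * U * W) i j)) (aux_unitary_ds hNmem)
    simpa [Matrix.of_apply] using this

/-- The minimum of `Tr(ρ H')` over the unitary orbit of `H` is achieved by a
Hamiltonian commuting with `ρ`, with value `∑ᵢ p↑ᵢ λ↓ᵢ` (eigenvalues of `ρ`
non-decreasing against eigenvalues of `H` non-increasing). -/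
theorem min_energy_on_unitary_orbit (m : ℕ) (ρ H : Matrix (Fin m) (Fin m) ℂ)
    (hρ : ρ.PosSemidef) (hρ1 : Matrix.trace ρ = 1) (hH : H.IsHermitian)
    (p lam : Fin m → ℝ) (hpmono : Monotone p) (hlanti : Antitone lam)
    (hp : ∃ e : Equiv.Perm (Fin m), p = hρ.isHermitian.eigenvalues ∘ e)
    (hl : ∃ e : Equiv.Perm (Fin m), lam = hH.eigenvalues ∘ e) :
    ∃ Hstar : Matrix (Fin m) (Fin m) ℂ, Hstar.IsHermitian ∧
      (∃ U ∈ Matrix.unitaryGroup (Fin m) ℂ, Hstar = U * H * star U) ∧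
      ρ * Hstar = Hstar * ρ ∧
      trR (ρ * Hstar) = ∑ i, p i * lam i ∧
      ∀ U ∈ Matrix.unitaryGroup (Fin m) ℂ, ∑ i, p i * lam i ≤ trR (ρ * (U * H * star U)) := by
  obtain ⟨ep, hep⟩ := hp
  obtain ⟨el, hel⟩ := hl
  have hρd : ρ = ((hρ.isHermitian.eigenvectorUnitary : Matrix (Fin m) (Fin m) ℂ).submatrix id ⇑ep)
      * Matrix.diagonal (fun i => ((p i : ℝ) : ℂ))
      * star ((hρ.isHermitian.eigenvectorUnitary : Matrix (Fin m) (Fin m) ℂ).submatrix id ⇑ep) := by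
    have h2 := aux_conj_perm (hρ.isHermitian.eigenvectorUnitary : Matrix (Fin m) (Fin m) ℂ) ep
      (RCLike.ofReal ∘ hρ.isHermitian.eigenvalues)
    have h3 : (RCLike.ofReal ∘ hρ.isHermitian.eigenvalues) ∘ ⇑ep
        = fun i => ((p i : ℝ) : ℂ) := by
      funext i
      simp [hep, Function.comp]
    rw [h3] at h2
    exact hρ.isHermitian.spectral_theorem.trans h2.symm
  have hHd : H = ((hH.eigenvectorUnitary : Matrix (Fin m) (Fin m) ℂ).submatrix id ⇑el)
      * Matrix.diagonal (fun i => ((lam i : ℝ) : ℂ))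
      * star ((hH.eigenvectorUnitary : Matrix (Fin m) (Fin m) ℂ).submatrix id ⇑el) := by
    have h2 := aux_conj_perm (hH.eigenvectorUnitary : Matrix (Fin m) (Fin m) ℂ) el
      (RCLike.ofReal ∘ hH.eigenvalues)
    have h3 : (RCLike.ofReal ∘ hH.eigenvalues) ∘ ⇑el = fun i => ((lam i : ℝ) : ℂ) := by
      funext i
      simp [hel, Function.comp]
    rw [h3] at h2
    exact hH.spectral_theorem.trans h2.symm
  exact aux_main ρ H p lam hpmono hlanti _ _
    (aux_submatrix_unitary hρ.isHermitian.eigenvectorUnitary.2 ep)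
    (aux_submatrix_unitary hH.eigenvectorUnitary.2 el) hρd hHd
end

section
/- Second law under control restrictions (upper-bound part): consider a finite protocol on a finite-dimensional system alternating unitary steps (with Hamiltonians restricted to a set ℋ containing H₀, work = energy decrease) and full thermalizations ρ ↦ ω_{H_t} at the current Hamiltonian H_t ∈ ℋ. If the protocol starts at (ρ₀, H₀), performs its first thermalization at Hamiltonian H₁ ∈ ℋ with pre-thermalization state ρ₁ = U₁ρ₀U₁†, and ends at (ρ_f, H_f), then the total work satisfies ⟨W⟩ ≤ F(ρ₀,H₀) - F(ρ_f,H_f) - (F(ρ₁,H₁) - F(ω_{H₁},H₁)). -/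
open Matrix BigOperators ComplexOrder

variable {n : Type*} [Fintype n] [DecidableEq n]

section Helpers
open Polynomial
variable {n : Type*} [Fintype n] [DecidableEq n]

lemma charpoly_unitary_conj (W A : Matrix n n ℂ) (hW : W ∈ Matrix.unitaryGroup n ℂ) :
    (W * A * star W).charpoly = A.charpoly := by
  have hW1 : W * star W = 1 := (Matrix.mem_unitaryGroup_iff).mp hW
  have hW2 : star W * W = 1 := (Matrix.mem_unitaryGroup_iff').mp hW
  have key : charmatrix (W * A * star W) =
      W.map (C : ℂ →+* ℂ[X]) * charmatrix A * (star W).map (C : ℂ →+* ℂ[X]) := by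
    simp only [charmatrix, mul_sub, sub_mul, RingHom.mapMatrix_apply]
    congr 1
    · rw [← (Matrix.scalar_commute (X : ℂ[X]) (fun r => Commute.all _ r) (W.map C)).eq,
        mul_assoc, ← Matrix.map_mul, hW1, Matrix.map_one _ (map_zero C) (map_one C), mul_one]
    · rw [← Matrix.map_mul, ← Matrix.map_mul]
  rw [Matrix.charpoly, Matrix.charpoly, key, det_mul, det_mul, mul_comm, ← mul_assoc,
    ← det_mul, ← Matrix.map_mul, hW2, Matrix.map_one _ (map_zero C) (map_one C), det_one, one_mul]

lemma charpoly_conj_diag (W : Matrix n n ℂ) (hW : W ∈ Matrix.unitaryGroup n ℂ) (d : n → ℝ) :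
    (W * Matrix.diagonal (fun i => (d i : ℂ)) * star W).charpoly
      = ∏ i, (X - C (d i : ℂ)) := by
  rw [charpoly_unitary_conj _ _ hW, Matrix.charpoly]
  have : charmatrix (Matrix.diagonal (fun i => (d i : ℂ)))
      = Matrix.diagonal (fun i => (X - C (d i : ℂ))) := by
    ext i j
    rcases eq_or_ne i j with rfl | h
    · simp [charmatrix_apply]
    · simp [charmatrix_apply, Matrix.diagonal_apply_ne _ h, h]
  rw [this, det_diagonal]

lemma eig_multiset {A : Matrix n n ℂ} (hA : A.IsHermitian) {W : Matrix n n ℂ}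
    (hW : W ∈ Matrix.unitaryGroup n ℂ) {d : n → ℝ}
    (hAeq : A = W * Matrix.diagonal (fun i => (d i : ℂ)) * star W) :
    Finset.univ.val.map hA.eigenvalues = Finset.univ.val.map d := by
  have h1 : A.charpoly = ∏ i, (X - C (d i : ℂ)) := hAeq ▸ charpoly_conj_diag W hW d
  have h2 : A.charpoly = ∏ i, (X - C (hA.eigenvalues i : ℂ)) := by
    have := hA.spectral_theorem
    rw [Unitary.conjStarAlgAut_apply] at this
    have h3 : A = (hA.eigenvectorUnitary : Matrix n n ℂ) *
        Matrix.diagonal (fun i => ((hA.eigenvalues i : ℝ) : ℂ)) *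
        star (hA.eigenvectorUnitary : Matrix n n ℂ) := by
      exact this
    conv_lhs => rw [h3]
    rw [charpoly_conj_diag _ (SetLike.coe_mem hA.eigenvectorUnitary) hA.eigenvalues]
  have key : Finset.univ.val.map (fun i => (hA.eigenvalues i : ℂ))
      = Finset.univ.val.map (fun i => (d i : ℂ)) := by
    have r1 := Polynomial.roots_multiset_prod_X_sub_C
      (Finset.univ.val.map (fun i => (hA.eigenvalues i : ℂ)))
    have r2 := Polynomial.roots_multiset_prod_X_sub_C
      (Finset.univ.val.map (fun i => (d i : ℂ)))
    rw [Multiset.map_map] at r1 r2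
    have : (Finset.univ.val.map fun i => X - C ((hA.eigenvalues i : ℝ) : ℂ)).prod
        = (Finset.univ.val.map fun i => X - C ((d i : ℝ) : ℂ)).prod := by
      rw [← Finset.prod_eq_multiset_prod, ← Finset.prod_eq_multiset_prod, ← h1, ← h2]
    rw [← r1, ← r2]
    exact congrArg _ this
  have : Finset.univ.val.map ((fun x : ℝ => (x : ℂ)) ∘ hA.eigenvalues)
      = Finset.univ.val.map ((fun x : ℝ => (x : ℂ)) ∘ d) := by
    rw [← Multiset.map_map, ← Multiset.map_map (g := fun x : ℝ => (x : ℂ))]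
    simpa [Multiset.map_map] using key
  exact Multiset.map_injective Complex.ofReal_injective
    (by simpa [Multiset.map_map] using this)

lemma eig_sum {A : Matrix n n ℂ} (hA : A.IsHermitian) {W : Matrix n n ℂ}
    (hW : W ∈ Matrix.unitaryGroup n ℂ) {d : n → ℝ}
    (hAeq : A = W * Matrix.diagonal (fun i => (d i : ℂ)) * star W) (f : ℝ → ℝ) :
    ∑ i, f (hA.eigenvalues i) = ∑ i, f (d i) := by
  rw [Finset.sum_eq_multiset_sum, Finset.sum_eq_multiset_sum,
    show (Finset.univ.val.map fun i => f (hA.eigenvalues i))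
      = (Finset.univ.val.map hA.eigenvalues).map f by rw [Multiset.map_map]; rfl,
    show (Finset.univ.val.map fun i => f (d i)) = (Finset.univ.val.map d).map f by
      rw [Multiset.map_map]; rfl,
    eig_multiset hA hW hAeq]

lemma eig_mem {A : Matrix n n ℂ} (hA : A.IsHermitian) {W : Matrix n n ℂ}
    (hW : W ∈ Matrix.unitaryGroup n ℂ) {d : n → ℝ}
    (hAeq : A = W * Matrix.diagonal (fun i => (d i : ℂ)) * star W) (i : n) :
    ∃ j, hA.eigenvalues i = d j := by
  have : hA.eigenvalues i ∈ Finset.univ.val.map d := by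
    rw [← eig_multiset hA hW hAeq]
    exact Multiset.mem_map_of_mem _ (Finset.mem_univ_val _)
  obtain ⟨j, _, hj⟩ := Multiset.mem_map.mp this
  exact ⟨j, hj.symm⟩

lemma trace_conj_diag {W : Matrix n n ℂ} (hW : W ∈ Matrix.unitaryGroup n ℂ) (d : n → ℂ) :
    Matrix.trace (W * Matrix.diagonal d * star W) = ∑ i, d i := by
  rw [Matrix.trace_mul_cycle, (Matrix.mem_unitaryGroup_iff').mp hW, one_mul,
    Matrix.trace_diagonal]

lemma conj_conj_diag {U W : Matrix n n ℂ} (hU : U ∈ Matrix.unitaryGroup n ℂ)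
    (hW : W ∈ Matrix.unitaryGroup n ℂ) (d : n → ℂ) :
    U * (W * Matrix.diagonal d * star W) * star U
      = (U * W) * Matrix.diagonal d * star (U * W) := by
  rw [StarMul.star_mul]
  simp only [mul_assoc]


lemma diagonal_congr {f g : n → ℂ} (h : ∀ i, f i = g i) : Matrix.diagonal f = Matrix.diagonal g := by
  exact congrArg Matrix.diagonal (funext h)

/-- Spectral form of `mexp`. -/
lemma mexp_eq {H : Matrix n n ℂ} (hH : H.IsHermitian) (β : ℝ) :
    mexp β H = (hH.eigenvectorUnitary : Matrix n n ℂ) *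
      Matrix.diagonal (fun i => ((Real.exp (-(β * hH.eigenvalues i)) : ℝ) : ℂ)) *
      star (hH.eigenvectorUnitary : Matrix n n ℂ) := by
  set V : Matrix n n ℂ := (hH.eigenvectorUnitary : Matrix n n ℂ) with hV
  have hVmem := SetLike.coe_mem hH.eigenvectorUnitary
  have hV1 : V * star V = 1 := (Matrix.mem_unitaryGroup_iff).mp hVmem
  have hV2 : star V * V = 1 := (Matrix.mem_unitaryGroup_iff').mp hVmem
  have hVU : IsUnit V := ⟨⟨V, star V, hV1, hV2⟩, rfl⟩
  have hVinv : V⁻¹ = star V := Matrix.inv_eq_right_inv hV1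
  have hsm : (-β : ℂ) • H = V * Matrix.diagonal (fun i => ((-(β * hH.eigenvalues i) : ℝ) : ℂ))
      * star V := by
    conv_lhs => rw [hH.spectral_theorem, Unitary.conjStarAlgAut_apply]
    rw [← Matrix.smul_mul, ← Matrix.mul_smul, ← Matrix.diagonal_smul]
    congr 2
    refine diagonal_congr fun i => ?_
    simp only [Pi.smul_apply, Function.comp_apply, smul_eq_mul]
    push_cast
    ring_nf
    rfl
  have e1 : mexp β H = V * NormedSpace.exp
      (Matrix.diagonal (fun i => ((-(β * hH.eigenvalues i) : ℝ) : ℂ))) * V⁻¹ := by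
    rw [mexp, hsm, ← hVinv]
    exact Matrix.exp_conj V _ hVU
  have e2 : NormedSpace.exp (Matrix.diagonal (fun i => ((-(β * hH.eigenvalues i) : ℝ) : ℂ)))
      = Matrix.diagonal (fun i => ((Real.exp (-(β * hH.eigenvalues i)) : ℝ) : ℂ)) := by
    rw [Matrix.exp_diagonal]
    refine diagonal_congr fun i => ?_
    rw [show (NormedSpace.exp (fun i => ((-(β * hH.eigenvalues i) : ℝ) : ℂ)) : n → ℂ) i
        = NormedSpace.exp (((-(β * hH.eigenvalues i) : ℝ) : ℂ)) from Pi.coe_exp _ i,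
      ← Complex.exp_eq_exp_ℂ, ← Complex.ofReal_exp]
  rw [e1, e2, hVinv]

/-- partition function -/
noncomputable def partZ {m : Type*} [Fintype m] [DecidableEq m] (β : ℝ) {H : Matrix m m ℂ}
    (hH : H.IsHermitian) : ℝ := ∑ i, Real.exp (-(β * hH.eigenvalues i))

/-- gibbs eigenvalue function -/
noncomputable def gv {m : Type*} [Fintype m] [DecidableEq m] (β : ℝ) {H : Matrix m m ℂ}
    (hH : H.IsHermitian) : m → ℝ := fun i => Real.exp (-(β * hH.eigenvalues i)) / partZ β hH

lemma partZ_pos [Nonempty n] (β : ℝ) {H : Matrix n n ℂ} (hH : H.IsHermitian) :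
    0 < partZ β hH :=
  Finset.sum_pos (fun i _ => Real.exp_pos _) Finset.univ_nonempty

lemma gv_pos [Nonempty n] (β : ℝ) {H : Matrix n n ℂ} (hH : H.IsHermitian) (i : n) :
    0 < gv β hH i := div_pos (Real.exp_pos _) (partZ_pos β hH)

lemma gv_sum [Nonempty n] (β : ℝ) {H : Matrix n n ℂ} (hH : H.IsHermitian) :
    ∑ i, gv β hH i = 1 := by
  simp only [gv]
  rw [← Finset.sum_div, div_eq_one_iff_eq (partZ_pos β hH).ne']
  rfl

lemma gv_log [Nonempty n] (β : ℝ) {H : Matrix n n ℂ} (hH : H.IsHermitian) (i : n) :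
    Real.log (gv β hH i) = -(β * hH.eigenvalues i) - Real.log (partZ β hH) := by
  rw [gv, Real.log_div (Real.exp_pos _).ne' (partZ_pos β hH).ne', Real.log_exp]

lemma trace_mexp [Nonempty n] (β : ℝ) {H : Matrix n n ℂ} (hH : H.IsHermitian) :
    Matrix.trace (mexp β H) = ((partZ β hH : ℝ) : ℂ) := by
  rw [mexp_eq hH β, trace_conj_diag (SetLike.coe_mem hH.eigenvectorUnitary), partZ]
  push_cast
  rfl

/-- Spectral form of the Gibbs state. -/
lemma gibbs_eq [Nonempty n] (β : ℝ) {H : Matrix n n ℂ} (hH : H.IsHermitian) :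
    gibbs β H = (hH.eigenvectorUnitary : Matrix n n ℂ) *
      Matrix.diagonal (fun i => ((gv β hH i : ℝ) : ℂ)) *
      star (hH.eigenvectorUnitary : Matrix n n ℂ) := by
  rw [gibbs, trace_mexp β hH, mexp_eq hH β, ← Matrix.smul_mul, ← Matrix.mul_smul,
    ← Matrix.diagonal_smul]
  congr 2
  refine diagonal_congr fun i => ?_
  simp only [Pi.smul_apply, smul_eq_mul, gv]
  rw [← Complex.ofReal_inv, ← Complex.ofReal_mul]
  congr 1
  rw [div_eq_inv_mul]
lemma spectral_coe {A : Matrix n n ℂ} (hA : A.IsHermitian) :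
    A = (hA.eigenvectorUnitary : Matrix n n ℂ) *
      Matrix.diagonal (fun i => ((hA.eigenvalues i : ℝ) : ℂ)) *
      star (hA.eigenvectorUnitary : Matrix n n ℂ) := by
  have := hA.spectral_theorem
  rw [Unitary.conjStarAlgAut_apply] at this
  exact this

lemma trace_eq_sum_eigs {A : Matrix n n ℂ} (hA : A.IsHermitian) :
    Matrix.trace A = ((∑ i, hA.eigenvalues i : ℝ) : ℂ) := by
  conv_lhs => rw [spectral_coe hA]
  rw [trace_conj_diag (SetLike.coe_mem hA.eigenvectorUnitary)]
  push_cast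
  rfl

lemma unitary_row_sum {U : Matrix n n ℂ} (hU : U ∈ Matrix.unitaryGroup n ℂ) (i : n) :
    ∑ j, Complex.normSq (U i j) = 1 := by
  have h1 : (U * star U) i i = 1 := by
    rw [(Matrix.mem_unitaryGroup_iff).mp hU]; simp
  rw [Matrix.mul_apply] at h1
  have : ∑ j, U i j * star U j i = ∑ j, ((Complex.normSq (U i j) : ℝ) : ℂ) := by
    refine Finset.sum_congr rfl fun j _ => ?_
    rw [Matrix.star_apply, Complex.star_def, Complex.mul_conj]
  rw [this] at h1
  exact_mod_cast h1

lemma unitary_col_sum {U : Matrix n n ℂ} (hU : U ∈ Matrix.unitaryGroup n ℂ) (j : n) :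
    ∑ i, Complex.normSq (U i j) = 1 := by
  have h1 : (star U * U) j j = 1 := by
    rw [(Matrix.mem_unitaryGroup_iff').mp hU]; simp
  rw [Matrix.mul_apply] at h1
  have : ∑ i, star U j i * U i j = ∑ i, ((Complex.normSq (U i j) : ℝ) : ℂ) := by
    refine Finset.sum_congr rfl fun i _ => ?_
    rw [Matrix.star_apply, Complex.star_def, mul_comm, Complex.mul_conj]
  rw [this] at h1
  exact_mod_cast h1

lemma trR_conj_diag_mul {P V : Matrix n n ℂ} (hP : P ∈ Matrix.unitaryGroup n ℂ)
    (hV : V ∈ Matrix.unitaryGroup n ℂ) (p h : n → ℝ) :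
    trR ((P * Matrix.diagonal (fun i => ((p i : ℝ) : ℂ)) * star P) *
        (V * Matrix.diagonal (fun i => ((h i : ℝ) : ℂ)) * star V))
      = ∑ i, ∑ j, p i * h j * Complex.normSq ((star P * V) i j) := by
  set M : Matrix n n ℂ := star P * V with hM
  have hP1 : P * star P = 1 := (Matrix.mem_unitaryGroup_iff).mp hP
  set Dp : Matrix n n ℂ := Matrix.diagonal (fun i => ((p i : ℝ) : ℂ))
  set Dh : Matrix n n ℂ := Matrix.diagonal (fun i => ((h i : ℝ) : ℂ))
  have e1 : (P * Dp * star P) * (V * Dh * star V) = P * Dp * (star P * (V * Dh * star V)) := by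
    simp only [mul_assoc]
  have e2 : Matrix.trace ((P * Dp * star P) * (V * Dh * star V))
      = Matrix.trace ((M * Dh * (star V * P)) * Dp) := by
    rw [e1, Matrix.trace_mul_comm]
    congr 1
    simp only [hM, mul_assoc]
  have hsM : star V * P = star M := by
    rw [hM, StarMul.star_mul, star_star]
  have e3 : Matrix.trace ((M * Dh * star M) * Dp)
      = ∑ i, (M * Dh * star M) i i * ((p i : ℝ) : ℂ) := by
    rw [Matrix.trace]
    refine Finset.sum_congr rfl fun i _ => ?_
    rw [Matrix.diag_apply, Matrix.mul_diagonal]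
  have e4 : ∀ i, (M * Dh * star M) i i = ((∑ j, h j * Complex.normSq (M i j) : ℝ) : ℂ) := by
    intro i
    rw [Matrix.mul_apply]
    push_cast
    refine Finset.sum_congr rfl fun j _ => ?_
    rw [Matrix.mul_diagonal, Matrix.star_apply, Complex.star_def,
      mul_comm (M i j) ((h j : ℝ) : ℂ), mul_assoc, Complex.mul_conj]
  rw [trR, e2, hsM, e3]
  have : ∑ i, (M * Dh * star M) i i * ((p i : ℝ) : ℂ)
      = ((∑ i, ∑ j, p i * h j * Complex.normSq (M i j) : ℝ) : ℂ) := by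
    push_cast
    refine Finset.sum_congr rfl fun i _ => ?_
    rw [e4 i]
    push_cast
    rw [Finset.sum_mul]
    refine Finset.sum_congr rfl fun j _ => ?_
    ring
  rw [this, Complex.ofReal_re]

lemma klein_point (p q : ℝ) (hp : 0 ≤ p) (hq : 0 < q) :
    p - q ≤ p * Real.log p - p * Real.log q := by
  rcases eq_or_lt_of_le hp with h | h
  · rw [← h]
    simp
    linarith
  · have hlog : Real.log (q / p) ≤ q / p - 1 := Real.log_le_sub_one_of_pos (div_pos hq h)
    rw [Real.log_div hq.ne' h.ne'] at hlog
    have h2 := mul_le_mul_of_nonneg_left hlog h.le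
    have hqp : p * (q / p - 1) = q - p := by field_simp
    nlinarith

lemma gibbs_freeEnergy_eq [Nonempty n] {β : ℝ} (hβ : 0 < β) {H : Matrix n n ℂ}
    (hH : H.IsHermitian) (hg : (gibbs β H).IsHermitian) :
    freeEnergy β (gibbs β H) H hg = -(Real.log (partZ β hH)) / β := by
  set V : Matrix n n ℂ := (hH.eigenvectorUnitary : Matrix n n ℂ) with hVdef
  have hVmem : V ∈ Matrix.unitaryGroup n ℂ := SetLike.coe_mem hH.eigenvectorUnitary
  have htr1 : trR (gibbs β H * H) = ∑ i, gv β hH i * hH.eigenvalues i := by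
    have e := trR_conj_diag_mul hVmem hVmem (gv β hH) hH.eigenvalues
    rw [← gibbs_eq β hH, ← spectral_coe hH] at e
    rw [e, (Matrix.mem_unitaryGroup_iff').mp hVmem]
    refine Finset.sum_congr rfl fun i _ => ?_
    rw [Finset.sum_eq_single i]
    · rw [Matrix.one_apply_eq]
      norm_num [Complex.normSq_one]
    · intro j _ hj
      rw [Matrix.one_apply_ne (Ne.symm hj)]
      simp
    · intro hi
      exact absurd (Finset.mem_univ i) hi
  have hS : vnEntropy hg = -∑ i, gv β hH i * Real.log (gv β hH i) := by
    rw [vnEntropy]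
    exact congrArg Neg.neg (eig_sum hg hVmem (gibbs_eq β hH) (fun x => x * Real.log x))
  have hlog : ∑ i, gv β hH i * Real.log (gv β hH i)
      = -(β * ∑ i, gv β hH i * hH.eigenvalues i) - Real.log (partZ β hH) := by
    have : ∀ i, gv β hH i * Real.log (gv β hH i)
        = -(β * (gv β hH i * hH.eigenvalues i)) - gv β hH i * Real.log (partZ β hH) := by
      intro i
      rw [gv_log β hH i]
      ring
    rw [Finset.sum_congr rfl (fun i _ => this i), Finset.sum_sub_distrib, ← Finset.sum_mul,
      gv_sum β hH, one_mul, Finset.sum_neg_distrib, ← Finset.mul_sum]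
  rw [freeEnergy, htr1, hS, hlog]
  field_simp
  ring

lemma freeEnergy_ge [Nonempty n] {β : ℝ} (hβ : 0 < β) {H ρ : Matrix n n ℂ}
    (hH : H.IsHermitian) (hρ : ρ.IsHermitian)
    (hpos : ∀ i, 0 ≤ hρ.eigenvalues i) (hsum : ∑ i, hρ.eigenvalues i = 1)
    (hg : (gibbs β H).IsHermitian) :
    freeEnergy β (gibbs β H) H hg ≤ freeEnergy β ρ H hρ := by
  set V : Matrix n n ℂ := (hH.eigenvectorUnitary : Matrix n n ℂ) with hVdef
  have hVmem : V ∈ Matrix.unitaryGroup n ℂ := SetLike.coe_mem hH.eigenvectorUnitary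
  set P : Matrix n n ℂ := (hρ.eigenvectorUnitary : Matrix n n ℂ) with hPdef
  have hPmem : P ∈ Matrix.unitaryGroup n ℂ := SetLike.coe_mem hρ.eigenvectorUnitary
  have hMmem : star P * V ∈ Matrix.unitaryGroup n ℂ := mul_mem (Unitary.star_mem hPmem) hVmem
  set p : n → ℝ := hρ.eigenvalues
  set h : n → ℝ := hH.eigenvalues
  set g : n → ℝ := gv β hH with hgdef
  set c : n → n → ℝ := fun i j => Complex.normSq ((star P * V) i j) with hcdef
  have hc0 : ∀ i j, 0 ≤ c i j := fun i j => Complex.normSq_nonneg _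
  have hrow : ∀ i, ∑ j, c i j = 1 := fun i => unitary_row_sum hMmem i
  have hcol : ∀ j, ∑ i, c i j = 1 := fun j => unitary_col_sum hMmem j
  have htr2 : trR (ρ * H) = ∑ i, ∑ j, p i * h j * c i j := by
    have e := trR_conj_diag_mul hPmem hVmem p h
    rw [← spectral_coe hρ, ← spectral_coe hH] at e
    exact e
  have hkey : 0 ≤ β * (∑ i, ∑ j, p i * h j * c i j) + ∑ i, p i * Real.log (p i)
      + Real.log (partZ β hH) := by
    have hexp : β * (∑ i, ∑ j, p i * h j * c i j) + ∑ i, p i * Real.log (p i)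
        + Real.log (partZ β hH)
        = ∑ i, ∑ j, c i j * (p i * Real.log (p i) - p i * Real.log (g j)) := by
      have e1 : ∑ i, p i * Real.log (p i) = ∑ i, ∑ j, c i j * (p i * Real.log (p i)) := by
        refine Finset.sum_congr rfl fun i _ => ?_
        rw [← Finset.sum_mul, hrow i, one_mul]
      have e2 : Real.log (partZ β hH) = ∑ i, ∑ j, c i j * (p i * Real.log (partZ β hH)) := by
        have : ∀ i, ∑ j, c i j * (p i * Real.log (partZ β hH))
            = p i * Real.log (partZ β hH) := by
          intro i
          rw [← Finset.sum_mul, hrow i, one_mul]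
        rw [Finset.sum_congr rfl (fun i _ => this i), ← Finset.sum_mul, hsum, one_mul]
      have e3 : β * (∑ i, ∑ j, p i * h j * c i j)
          = ∑ i, ∑ j, c i j * (β * (p i * h j)) := by
        rw [Finset.mul_sum]
        refine Finset.sum_congr rfl fun i _ => ?_
        rw [Finset.mul_sum]
        refine Finset.sum_congr rfl fun j _ => ?_
        ring
      rw [e3]
      conv_lhs => rw [e1, e2]
      rw [← Finset.sum_add_distrib, ← Finset.sum_add_distrib]
      refine Finset.sum_congr rfl fun i _ => ?_
      rw [← Finset.sum_add_distrib, ← Finset.sum_add_distrib]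
      refine Finset.sum_congr rfl fun j _ => ?_
      have hlg : Real.log (g j) = -(β * h j) - Real.log (partZ β hH) := gv_log β hH j
      rw [hlg]
      ring
    rw [hexp]
    have hpt : ∀ i j, c i j * (p i - g j)
        ≤ c i j * (p i * Real.log (p i) - p i * Real.log (g j)) := by
      intro i j
      exact mul_le_mul_of_nonneg_left (klein_point (p i) (g j) (hpos i) (gv_pos β hH j)) (hc0 i j)
    have hzero : ∑ i, ∑ j, c i j * (p i - g j) = 0 := by
      have : ∑ i, ∑ j, c i j * (p i - g j)
          = (∑ i, ∑ j, c i j * p i) - (∑ i, ∑ j, c i j * g j) := by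
        rw [← Finset.sum_sub_distrib]
        refine Finset.sum_congr rfl fun i _ => ?_
        rw [← Finset.sum_sub_distrib]
        refine Finset.sum_congr rfl fun j _ => ?_
        ring
      rw [this]
      have ha : ∑ i, ∑ j, c i j * p i = 1 := by
        have : ∀ i, ∑ j, c i j * p i = p i := by
          intro i; rw [← Finset.sum_mul, hrow i, one_mul]
        rw [Finset.sum_congr rfl (fun i _ => this i), hsum]
      have hb : ∑ i, ∑ j, c i j * g j = 1 := by
        rw [Finset.sum_comm]
        have : ∀ j, ∑ i, c i j * g j = g j := by
          intro j; rw [← Finset.sum_mul, hcol j, one_mul]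
        rw [Finset.sum_congr rfl (fun j _ => this j), gv_sum]
      rw [ha, hb, sub_self]
    calc (0 : ℝ) = ∑ i, ∑ j, c i j * (p i - g j) := hzero.symm
      _ ≤ _ := by
        refine Finset.sum_le_sum fun i _ => ?_
        exact Finset.sum_le_sum fun j _ => hpt i j
  rw [gibbs_freeEnergy_eq hβ hH hg, freeEnergy, htr2]
  have hent : vnEntropy hρ = -∑ i, p i * Real.log (p i) := rfl
  rw [hent]
  set T := ∑ i, ∑ j, p i * h j * c i j with hT
  set S := ∑ i, p i * Real.log (p i) with hSdef
  set L := Real.log (partZ β hH) with hL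
  have h1 : T - (-S)/β - (-L/β) = (β*T + S + L)/β := by
    field_simp
    ring
  have h2 : (0:ℝ) ≤ (β*T + S + L)/β := div_nonneg hkey hβ.le
  linarith

lemma conj_form {ρ U : Matrix n n ℂ} (hρ : ρ.IsHermitian) (hU : U ∈ Matrix.unitaryGroup n ℂ) :
    U * ρ * star U = (U * (hρ.eigenvectorUnitary : Matrix n n ℂ)) *
      Matrix.diagonal (fun i => ((hρ.eigenvalues i : ℝ) : ℂ)) *
      star (U * (hρ.eigenvectorUnitary : Matrix n n ℂ)) := by
  conv_lhs => rw [spectral_coe hρ]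
  exact conj_conj_diag hU (SetLike.coe_mem _) _

lemma eig_sum_conj {ρ ρ' U : Matrix n n ℂ} (hρ : ρ.IsHermitian)
    (hU : U ∈ Matrix.unitaryGroup n ℂ) (hρ' : ρ'.IsHermitian)
    (heq : ρ' = U * ρ * star U) (f : ℝ → ℝ) :
    ∑ i, f (hρ'.eigenvalues i) = ∑ i, f (hρ.eigenvalues i) :=
  eig_sum hρ' (mul_mem hU (SetLike.coe_mem _))
    (by rw [heq]; exact conj_form hρ hU) f

lemma eig_mem_conj {ρ ρ' U : Matrix n n ℂ} (hρ : ρ.IsHermitian)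
    (hU : U ∈ Matrix.unitaryGroup n ℂ) (hρ' : ρ'.IsHermitian)
    (heq : ρ' = U * ρ * star U) (i : n) :
    ∃ j, hρ'.eigenvalues i = hρ.eigenvalues j :=
  eig_mem hρ' (mul_mem hU (SetLike.coe_mem _))
    (by rw [heq]; exact conj_form hρ hU) i

lemma vnEntropy_conj {ρ ρ' U : Matrix n n ℂ} (hρ : ρ.IsHermitian)
    (hU : U ∈ Matrix.unitaryGroup n ℂ) (hρ' : ρ'.IsHermitian)
    (heq : ρ' = U * ρ * star U) : vnEntropy hρ' = vnEntropy hρ :=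
  congrArg Neg.neg (eig_sum_conj hρ hU hρ' heq (fun x => x * Real.log x))

lemma step_eq {β : ℝ} {σ σ' Hc Hn U : Matrix n n ℂ} (hσ : σ.IsHermitian)
    (hσ' : σ'.IsHermitian) (hU : U ∈ Matrix.unitaryGroup n ℂ)
    (heq : σ' = U * σ * star U) :
    trR (σ * Hc) - trR (σ' * Hn) = freeEnergy β σ Hc hσ - freeEnergy β σ' Hn hσ' := by
  rw [freeEnergy, freeEnergy, vnEntropy_conj hσ hU hσ' heq]
  ring

lemma state_conj_gibbs [Nonempty n] {β : ℝ} {H ρ' U : Matrix n n ℂ} (hH : H.IsHermitian)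
    (hU : U ∈ Matrix.unitaryGroup n ℂ) (hρ' : ρ'.IsHermitian)
    (heq : ρ' = U * gibbs β H * star U) :
    (∀ i, 0 ≤ hρ'.eigenvalues i) ∧ ∑ i, hρ'.eigenvalues i = 1 := by
  have hVmem : (hH.eigenvectorUnitary : Matrix n n ℂ) ∈ Matrix.unitaryGroup n ℂ :=
    SetLike.coe_mem _
  have hd : ρ' = (U * (hH.eigenvectorUnitary : Matrix n n ℂ)) *
      Matrix.diagonal (fun i => ((gv β hH i : ℝ) : ℂ)) *
      star (U * (hH.eigenvectorUnitary : Matrix n n ℂ)) := by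
    rw [heq, gibbs_eq β hH]
    exact conj_conj_diag hU hVmem _
  have hmem := mul_mem hU hVmem
  constructor
  · intro i
    obtain ⟨j, hj⟩ := eig_mem hρ' hmem hd i
    rw [hj]
    exact (gv_pos β hH j).le
  · have := eig_sum hρ' hmem hd (fun x => x)
    rw [this, gv_sum β hH]

lemma tele (a b : ℕ → ℝ) : ∀ N, 1 ≤ N → (∀ j, 2 ≤ j → j ≤ N → b j ≤ a j) →
    ∑ j ∈ Finset.Ico 1 N, (b j - a (j + 1)) + b N ≤ b 1 := by
  intro N
  induction N with
  | zero => intro h; exact absurd h (by norm_num)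
  | succ N ih =>
    intro _ hba
    rcases eq_or_ne N 0 with rfl | hN0
    · simp
    · have hN : 1 ≤ N := Nat.one_le_iff_ne_zero.mpr hN0
      rw [Finset.sum_Ico_succ_top hN]
      have hb := hba (N + 1) (by omega) (le_refl _)
      have := ih hN (fun j h2 hj => hba j h2 (by omega))
      linarith

end Helpers
/-- Second law under control restrictions (upper-bound part of Theorem 1): a
protocol alternating unitary steps (Hamiltonians restricted to a set `ℋ`) and
full thermalizations satisfies
`⟨W⟩ ≤ F(ρ₀,H₀) - F(ρ_f,H_f) - (F(ρ₁,H₁) - F(ω_{H₁},H₁))`. -/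
theorem second_law_restricted_control (β : ℝ) (hβ : 0 < β) (N : ℕ) (hN : 1 ≤ N)
    (ℋ : Set (Matrix n n ℂ)) (H : ℕ → Matrix n n ℂ) (ρ : ℕ → Matrix n n ℂ)
    (ρf Hf : Matrix n n ℂ)
    (hmem : ∀ j ≤ N, H j ∈ ℋ) (hHfmem : Hf ∈ ℋ)
    (hH : ∀ j, (H j).IsHermitian) (hHf : Hf.IsHermitian)
    (hρ0 : (ρ 0).PosSemidef) (ht0 : Matrix.trace (ρ 0) = 1)
    (hρh : ∀ j, (ρ j).IsHermitian) (hρfh : ρf.IsHermitian)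
    (hg : ∀ j, (gibbs β (H j)).IsHermitian)
    (hU1 : ∃ U ∈ Matrix.unitaryGroup n ℂ, ρ 1 = U * ρ 0 * star U)
    (hUj : ∀ j, 1 ≤ j → j < N →
      ∃ U ∈ Matrix.unitaryGroup n ℂ, ρ (j + 1) = U * gibbs β (H j) * star U)
    (hUf : ∃ U ∈ Matrix.unitaryGroup n ℂ, ρf = U * gibbs β (H N) * star U)
    (W : ℝ)
    (hW : W = trR (ρ 0 * H 0) - trR (ρ 1 * H 1) +
      (∑ j ∈ Finset.Ico 1 N,
        (trR (gibbs β (H j) * H j) - trR (ρ (j + 1) * H (j + 1)))) +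
      trR (gibbs β (H N) * H N) - trR (ρf * Hf)) :
    W ≤ freeEnergy β (ρ 0) (H 0) (hρh 0) - freeEnergy β ρf Hf hρfh -
      (freeEnergy β (ρ 1) (H 1) (hρh 1) - freeEnergy β (gibbs β (H 1)) (H 1) (hg 1)) := by
  rcases isEmpty_or_nonempty n with hE | hNE
  · have ht : ∀ A : Matrix n n ℂ, trR A = 0 := fun A => by simp [trR, Matrix.trace]
    have hv : ∀ (A : Matrix n n ℂ) (h : A.IsHermitian), vnEntropy h = 0 := fun A h => by
      simp [vnEntropy]
    have hf : ∀ (A B : Matrix n n ℂ) (h : A.IsHermitian), freeEnergy β A B h = 0 := by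
      intro A B h
      simp [freeEnergy, ht, hv]
    rw [hW]
    simp [ht, hf]
  · -- abbreviations
    set a : ℕ → ℝ := fun j => freeEnergy β (ρ j) (H j) (hρh j) with ha
    set b : ℕ → ℝ := fun j => freeEnergy β (gibbs β (H j)) (H j) (hg j) with hb
    obtain ⟨U₁, hU₁mem, hU₁eq⟩ := hU1
    obtain ⟨Uf, hUfmem, hUfeq⟩ := hUf
    -- sum of eigenvalues of ρ 0 is 1
    have hsum0 : ∑ i, (hρh 0).eigenvalues i = 1 := by
      have := trace_eq_sum_eigs (hρh 0)
      rw [ht0] at this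
      exact_mod_cast this.symm
    -- state facts for each 1 ≤ j ≤ N
    have hstate : ∀ j, 1 ≤ j → j ≤ N →
        (∀ i, 0 ≤ (hρh j).eigenvalues i) ∧ (∑ i, (hρh j).eigenvalues i = 1) := by
      intro j h1 h2
      rcases eq_or_lt_of_le h1 with h1' | h1'
      · subst h1'
        constructor
        · intro i
          obtain ⟨k, hk⟩ := eig_mem_conj (hρh 0) hU₁mem (hρh 1) hU₁eq i
          rw [hk]
          exact hρ0.eigenvalues_nonneg k
        · rw [eig_sum_conj (hρh 0) hU₁mem (hρh 1) hU₁eq (fun x => x)]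
          exact hsum0
      · obtain ⟨U, hUmem, hUeq⟩ := hUj (j - 1) (by omega) (by omega)
        have hj1 : j - 1 + 1 = j := by omega
        rw [hj1] at hUeq
        exact state_conj_gibbs (hH (j - 1)) hUmem (hρh j) hUeq
    -- Klein inequality : b j ≤ a j for 1 ≤ j ≤ N
    have hba : ∀ j, 1 ≤ j → j ≤ N → b j ≤ a j := fun j h1 h2 =>
      freeEnergy_ge hβ (hH j) (hρh j) (hstate j h1 h2).1 (hstate j h1 h2).2 (hg j)
    -- step equalities
    have hE0 : trR (ρ 0 * H 0) - trR (ρ 1 * H 1) = a 0 - a 1 :=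
      step_eq (hρh 0) (hρh 1) hU₁mem hU₁eq
    have hES : ∑ j ∈ Finset.Ico 1 N,
        (trR (gibbs β (H j) * H j) - trR (ρ (j + 1) * H (j + 1)))
        = ∑ j ∈ Finset.Ico 1 N, (b j - a (j + 1)) := by
      refine Finset.sum_congr rfl fun j hj => ?_
      rw [Finset.mem_Ico] at hj
      obtain ⟨U, hUmem, hUeq⟩ := hUj j hj.1 hj.2
      exact step_eq (hg j) (hρh (j + 1)) hUmem hUeq
    have hEN : trR (gibbs β (H N) * H N) - trR (ρf * Hf)
        = b N - freeEnergy β ρf Hf hρfh :=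
      step_eq (hg N) hρfh hUfmem hUfeq
    have htel : ∑ j ∈ Finset.Ico 1 N, (b j - a (j + 1)) + b N ≤ b 1 :=
      tele a b N hN (fun j h2 hj => hba j (by omega) hj)
    rw [hW]
    have h1 : trR (ρ 0 * H 0) - trR (ρ 1 * H 1) +
        (∑ j ∈ Finset.Ico 1 N,
          (trR (gibbs β (H j) * H j) - trR (ρ (j + 1) * H (j + 1)))) +
        trR (gibbs β (H N) * H N) - trR (ρf * Hf)
        = (a 0 - a 1) + (∑ j ∈ Finset.Ico 1 N, (b j - a (j + 1)) + b N)
          - freeEnergy β ρf Hf hρfh := by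
      rw [hES]
      linarith [hE0, hEN]
    rw [h1]
    have hgoal : freeEnergy β (ρ 0) (H 0) (hρh 0) = a 0 := rfl
    have hgoal1 : freeEnergy β (ρ 1) (H 1) (hρh 1) = a 1 := rfl
    have hgoal2 : freeEnergy β (gibbs β (H 1)) (H 1) (hg 1) = b 1 := rfl
    rw [hgoal, hgoal1, hgoal2]
    linarith
end

section
/- Two-level norm-restricted no-work result: consider a classical bit with Hamiltonian Δ|1⟩⟨1| where Δ ∈ [Δ_min, Δ_max], β > 0, initial excitation probability p₀ ≤ e^{-βΔ_max}/(1+e^{-βΔ_max}) and initial gap Δ₀ = Δ_max. For any Δ₁ ∈ [Δ_min, Δ_max], the work from first shifting the gap to Δ₁ (work p₀(Δ_max - Δ₁)) plus the optimal isothermal work back (bounded by F(ω_{Δ₁}) - F(ω_{Δ_max}) with F(ω_Δ) = -β⁻¹ log(1+e^{-βΔ})) is ≤ 0. -/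
open Matrix BigOperators ComplexOrder

variable {n : Type*} [Fintype n] [DecidableEq n]

lemma key_log_ineq (u : ℝ) (hu : 0 < u) {t : ℝ} (ht : 0 ≤ t) :
    u / (1 + u) * t ≤ Real.log (1 + u * Real.exp t) - Real.log (1 + u) := by
  set g : ℝ → ℝ := fun s => Real.log (1 + u * Real.exp s) - u / (1 + u) * s with hg
  have hpos : ∀ s : ℝ, 0 < 1 + u * Real.exp s := fun s => by positivity
  have hderiv : ∀ s : ℝ, HasDerivAt g
      (u * Real.exp s / (1 + u * Real.exp s) - u / (1 + u)) s := by
    intro s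
    have h1 : HasDerivAt (fun s => 1 + u * Real.exp s) (u * Real.exp s) s := by
      simpa using ((Real.hasDerivAt_exp s).const_mul u).const_add 1
    have h2 : HasDerivAt (fun s => Real.log (1 + u * Real.exp s))
        (u * Real.exp s / (1 + u * Real.exp s)) s := h1.log (hpos s).ne'
    have h3 := h2.sub ((hasDerivAt_id s).const_mul (u / (1 + u)))
    simp only [mul_one] at h3
    exact h3
  have hmono : MonotoneOn g (Set.Ici 0) := by
    apply monotoneOn_of_deriv_nonneg (convex_Ici 0)
    · exact fun s _ => ((hderiv s).continuousAt).continuousWithinAt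
    · exact fun s _ => (hderiv s).differentiableAt.differentiableWithinAt
    · intro s hs
      rw [(hderiv s).deriv]
      have hs' : (0:ℝ) ≤ s := le_of_lt (by simpa using hs)
      have he : (1:ℝ) ≤ Real.exp s := Real.one_le_exp hs'
      rw [sub_nonneg, div_le_div_iff₀ (by positivity) (hpos s)]
      nlinarith
  have h0 : g 0 ≤ g t := hmono (by simp) (by simpa using ht) ht
  simp only [hg, Real.exp_zero, mul_one, mul_zero, sub_zero] at h0
  linarith

/-- Two-level norm-restricted no-work result:
`p₀ (Δmax - Δ₁) + β⁻¹ log ((1+e^{-βΔmax})/(1+e^{-βΔ₁})) ≤ 0` whenever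
`p₀ ≤ e^{-βΔmax}/(1+e^{-βΔmax})` and `Δmin ≤ Δ₁ ≤ Δmax`. -/
theorem no_work_norm_restricted (β Δmin Δmax Δ1 p0 : ℝ) (hβ : 0 < β)
    (h1 : Δmin ≤ Δ1) (h2 : Δ1 ≤ Δmax) (hp0 : 0 ≤ p0)
    (hpth : p0 ≤ Real.exp (-(β * Δmax)) / (1 + Real.exp (-(β * Δmax)))) :
    p0 * (Δmax - Δ1) + β⁻¹ *
      Real.log ((1 + Real.exp (-(β * Δmax))) / (1 + Real.exp (-(β * Δ1)))) ≤ 0 := by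
  set u := Real.exp (-(β * Δmax)) with hu
  set t := β * (Δmax - Δ1) with htdef
  have hupos : 0 < u := Real.exp_pos _
  have ht : 0 ≤ t := by
    have := sub_nonneg.mpr h2
    positivity
  have hue : u * Real.exp t = Real.exp (-(β * Δ1)) := by
    rw [hu, ← Real.exp_add, htdef]; ring_nf
  have hkey := key_log_ineq u hupos ht
  have hlog : Real.log ((1 + u) / (1 + Real.exp (-(β * Δ1))))
      = Real.log (1 + u) - Real.log (1 + Real.exp (-(β * Δ1))) := by
    apply Real.log_div (by positivity) (by positivity)
  rw [hlog, ← hue]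
  have hβi : 0 < β⁻¹ := inv_pos.mpr hβ
  have h4 : β⁻¹ * (Real.log (1 + u) - Real.log (1 + u * Real.exp t))
      ≤ β⁻¹ * (-(u / (1 + u) * t)) := by
    apply mul_le_mul_of_nonneg_left (by linarith) (le_of_lt hβi)
  have h5 : β⁻¹ * (u / (1 + u) * t) = u / (1 + u) * (Δmax - Δ1) := by
    rw [htdef]; field_simp
  have h6 : p0 * (Δmax - Δ1) ≤ u / (1 + u) * (Δmax - Δ1) :=
    mul_le_mul_of_nonneg_right hpth (by linarith)
  nlinarith [h4, h5, h6]
end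

section
/- Two-qubit thermo-majorization transition: let β = 1, H₀ = σ_z⊗σ_z, and for t ∈ ℝ let ω_t be the Gibbs state of σ_z⊗σ_z + t·𝟙⊗σ_z. The maximally mixed state 𝟙/4 thermo-majorizes ω_t relative to ω_0 (i.e., there exists a stochastic map fixing the spectrum of ω_0 and mapping the uniform distribution (1/4,...,1/4) to the spectrum of ω_t, both in the common eigenbasis) if and only if |t| ≤ t_c = artanh((e²-1)/(2e²)). -/
open Matrix BigOperators ComplexOrder

variable {n : Type*} [Fintype n] [DecidableEq n]

open Kronecker

/-- Spectrum of the Gibbs state of `σ_z ⊗ σ_z` at `β = 1`. -/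
noncomputable def specOmega0 : Fin 4 → ℝ :=
  fun i => (![Real.exp 2, Real.exp 2, 1, 1] i) / (2 * (1 + Real.exp 2))

/-- Spectrum of the Gibbs state of `σ_z ⊗ σ_z + t 𝟙 ⊗ σ_z` at `β = 1`. -/
noncomputable def specOmegaT (t : ℝ) : Fin 4 → ℝ :=
  fun i => (![Real.exp 2 * (1 + Real.tanh t), Real.exp 2 * (1 - Real.tanh t),
    1 + Real.tanh t, 1 - Real.tanh t] i) / (2 * (1 + Real.exp 2))


set_option maxHeartbeats 1000000 in
private lemma tanh_strictMono' : StrictMono Real.tanh := by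
  intro a b hab
  rw [Real.tanh_eq_sinh_div_cosh, Real.tanh_eq_sinh_div_cosh,
    div_lt_div_iff₀ (Real.cosh_pos a) (Real.cosh_pos b)]
  have h := Real.sinh_pos_iff.mpr (sub_pos.mpr hab)
  rw [Real.sinh_sub] at h
  nlinarith [Real.cosh_pos a, Real.cosh_pos b]

private lemma tanh_abs' (t : ℝ) : Real.tanh |t| = |Real.tanh t| := by
  rcases abs_cases t with ⟨h1, h2⟩ | ⟨h1, h2⟩
  · rw [h1, abs_of_nonneg]
    simpa using tanh_strictMono'.monotone h2
  · rw [h1, Real.tanh_neg, abs_of_nonpos]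
    simpa using tanh_strictMono'.monotone h2.le

set_option maxHeartbeats 1000000 in
/-- Two-qubit thermo-majorization: the maximally mixed state can be mapped to
`ω_t` by a stochastic map fixing the spectrum of `ω_0` iff `|t| ≤ t_c`, where
`tanh t_c = (e²-1)/(2e²)`. -/
theorem two_qubit_thermo_majorization (t tc : ℝ) (htcpos : 0 < tc)
    (htc : Real.tanh tc = (Real.exp 2 - 1) / (2 * Real.exp 2)) :
    (∃ M : Matrix (Fin 4) (Fin 4) ℝ, (∀ i j, 0 ≤ M i j) ∧ (∀ j, ∑ i, M i j = 1) ∧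
      M.mulVec specOmega0 = specOmega0 ∧
      M.mulVec (fun _ => (1 : ℝ) / 4) = specOmegaT t) ↔ |t| ≤ tc := by
  
  have hE : (1:ℝ) < Real.exp 2 := by
    rw [← Real.exp_zero]; exact Real.exp_lt_exp.mpr (by norm_num)
  have hiff : |t| ≤ tc ↔ 2 * Real.exp 2 * |Real.tanh t| ≤ Real.exp 2 - 1 := by
    rw [← tanh_strictMono'.le_iff_le, tanh_abs', htc, le_div_iff₀ (by positivity),
      mul_comm (|Real.tanh t|) (2 * Real.exp 2)]
  rw [hiff]
  constructor
  · rintro ⟨M, hpos, hcol, hMp, hMu⟩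
    have h1pE : (0:ℝ) < 1 + Real.exp 2 := by linarith
    have hne : (2 * (1 + Real.exp 2)) ≠ 0 := by positivity
    have h2p := congrFun hMp 2
    have h3p := congrFun hMp 3
    have h2u := congrFun hMu 2
    have h3u := congrFun hMu 3
    simp only [Matrix.mulVec, dotProduct, Fin.sum_univ_four, specOmega0, specOmegaT,
      Matrix.cons_val_zero, Matrix.cons_val_one, Matrix.head_cons, Matrix.cons_val_two,
      Matrix.cons_val_three, Matrix.tail_cons] at h2p h3p h2u h3u
    field_simp at h2p h3p h2u h3u
    have e2X : Real.exp 2 * (M 2 0 + M 2 1) ≤ 1 := by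
      nlinarith [hpos 2 2, hpos 2 3]
    have e3X : Real.exp 2 * (M 3 0 + M 3 1) ≤ 1 := by
      nlinarith [hpos 3 2, hpos 3 3]
    have hEsq : (0:ℝ) < Real.exp 2 ^ 2 - 1 := by nlinarith
    have hles : 2 * Real.exp 2 * Real.tanh t ≤ Real.exp 2 - 1 := by
      nlinarith [mul_le_mul_of_nonneg_right e3X hEsq.le, hpos 3 0, hpos 3 1]
    have hges : -(2 * Real.exp 2 * Real.tanh t) ≤ Real.exp 2 - 1 := by
      nlinarith [mul_le_mul_of_nonneg_right e2X hEsq.le, hpos 2 0, hpos 2 1]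
    rcases abs_cases (Real.tanh t) with ⟨h1, _⟩ | ⟨h1, _⟩ <;> rw [h1] <;> nlinarith
  · intro h
    obtain ⟨E, hEdef⟩ : ∃ E, Real.exp 2 = E := ⟨_, rfl⟩
    obtain ⟨s, hsdef⟩ : ∃ s, Real.tanh t = s := ⟨_, rfl⟩
    rw [hEdef] at hE h
    rw [hsdef] at h
    have hEpos : (0:ℝ) < E := by linarith
    have hD : (0:ℝ) < E^2 - 1 := by nlinarith
    have h1pE : (0:ℝ) < 1 + E := by linarith
    have habs := abs_nonneg s
    have hs1 : 2 * E * s ≤ E - 1 := by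
      rcases abs_cases s with ⟨h1, _⟩ | ⟨h1, _⟩ <;> nlinarith
    have hs2 : -(2 * E * s) ≤ E - 1 := by
      rcases abs_cases s with ⟨h1, _⟩ | ⟨h1, _⟩ <;> nlinarith
    have hs3 : 2 * s ≤ E - 1 := by nlinarith
    have hs4 : -(2 * s) ≤ E - 1 := by nlinarith
    have hne1 : E^2 - 1 ≠ 0 := ne_of_gt hD
    have hne2 : (1:ℝ) + E ≠ 0 := ne_of_gt h1pE
    refine ⟨Matrix.of ![
      ![E*(E-1-2*s)/(2*(E^2-1)), E*(E-1-2*s)/(2*(E^2-1)),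
        E*(E-1+2*E*s)/(2*(E^2-1)), E*(E-1+2*E*s)/(2*(E^2-1))],
      ![E*(E-1+2*s)/(2*(E^2-1)), E*(E-1+2*s)/(2*(E^2-1)),
        E*(E-1-2*E*s)/(2*(E^2-1)), E*(E-1-2*E*s)/(2*(E^2-1))],
      ![(E-1-2*s)/(2*(E^2-1)), (E-1-2*s)/(2*(E^2-1)),
        (E-1+2*E*s)/(2*(E^2-1)), (E-1+2*E*s)/(2*(E^2-1))],
      ![(E-1+2*s)/(2*(E^2-1)), (E-1+2*s)/(2*(E^2-1)),
        (E-1-2*E*s)/(2*(E^2-1)), (E-1-2*E*s)/(2*(E^2-1))]], ?_, ?_, ?_, ?_⟩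
    · intro i j
      fin_cases i <;> fin_cases j <;>
        · simp only [Matrix.of_apply, Fin.reduceFinMk, Matrix.cons_val_zero, Matrix.cons_val_one,
            Matrix.head_cons, Matrix.cons_val_two, Matrix.cons_val_three, Matrix.tail_cons,
            Matrix.cons_val', Matrix.empty_val', Matrix.cons_val_fin_one, Matrix.head_fin_const]
          apply div_nonneg _ (by linarith)
          nlinarith
    · intro j
      fin_cases j <;>
        · simp only [Fin.sum_univ_four, Matrix.of_apply, Fin.reduceFinMk, Matrix.cons_val_zero,
            Matrix.cons_val_one, Matrix.head_cons, Matrix.cons_val_two, Matrix.cons_val_three,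
            Matrix.tail_cons, Matrix.cons_val', Matrix.empty_val', Matrix.cons_val_fin_one,
            Matrix.head_fin_const]
          field_simp
          ring
    · funext i
      fin_cases i <;>
        · simp only [Matrix.mulVec, dotProduct, Fin.sum_univ_four, specOmega0, hEdef,
            Matrix.of_apply, Fin.reduceFinMk, Matrix.cons_val_zero, Matrix.cons_val_one,
            Matrix.head_cons, Matrix.cons_val_two, Matrix.cons_val_three, Matrix.tail_cons,
            Matrix.cons_val', Matrix.empty_val', Matrix.cons_val_fin_one, Matrix.head_fin_const]
          field_simp
          ring
    · funext i
      fin_cases i <;>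
        · simp only [Matrix.mulVec, dotProduct, Fin.sum_univ_four, specOmegaT, hEdef, hsdef,
            Matrix.of_apply, Fin.reduceFinMk, Matrix.cons_val_zero, Matrix.cons_val_one,
            Matrix.head_cons, Matrix.cons_val_two, Matrix.cons_val_three, Matrix.tail_cons,
            Matrix.cons_val', Matrix.empty_val', Matrix.cons_val_fin_one, Matrix.head_fin_const]
          field_simp
          ring
end

section
/- Work gap in the local two-qubit example: for 0 < t ≤ t_c = artanh((e²-1)/(2e²)) and β = 1, the free-energy difference ΔF(ω_t, σ_z⊗σ_z) between the Gibbs state ω_t of σ_z⊗σ_z + t·𝟙⊗σ_z and the Gibbs state of σ_z⊗σ_z equals t·tanh(t) - log(cosh(t)), and this quantity is strictly positive for t ≠ 0. -/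
open Matrix BigOperators ComplexOrder

variable {n : Type*} [Fintype n] [DecidableEq n]

open Kronecker

/-- The Pauli-Z matrix. -/
def pauliZ : Matrix (Fin 2) (Fin 2) ℂ := !![1, 0; 0, -1]

/-- The two-qubit Hamiltonian `σ_z ⊗ σ_z + t · 𝟙 ⊗ σ_z`. -/
noncomputable def twoQubitH (t : ℝ) : Matrix (Fin 2 × Fin 2) (Fin 2 × Fin 2) ℂ :=
  pauliZ ⊗ₖ pauliZ + (t : ℂ) • ((1 : Matrix (Fin 2) (Fin 2) ℂ) ⊗ₖ pauliZ)

/-! ### Auxiliary machinery -/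

section Aux

open Polynomial

variable {m : Type*} [Fintype m] [DecidableEq m]

lemma charpoly_unitary_conj' (U : Matrix.unitaryGroup m ℂ) (D : Matrix m m ℂ) :
    ((U : Matrix m m ℂ) * D * star (U : Matrix m m ℂ)).charpoly = D.charpoly := by
  set f := ((C : ℂ →+* ℂ[X]).mapMatrix : Matrix m m ℂ →+* Matrix m m ℂ[X]) with hf
  have hUU : (U : Matrix m m ℂ) * star (U : Matrix m m ℂ) = 1 := by
    have := congrArg Subtype.val (Unitary.mul_star_self U); simpa using this
  have hfUU : f (U : Matrix m m ℂ) * f (star (U : Matrix m m ℂ)) = 1 := by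
    rw [← _root_.map_mul f, hUU, _root_.map_one f]
  have key : charmatrix ((U : Matrix m m ℂ) * D * star (U : Matrix m m ℂ))
      = f U * charmatrix D * f (star (U : Matrix m m ℂ)) := by
    rw [charmatrix, charmatrix, mul_sub, sub_mul]
    congr 1
    · have h2 : f (U : Matrix m m ℂ) * Matrix.scalar m (X : ℂ[X])
          = Matrix.scalar m (X : ℂ[X]) * f U :=
        (Matrix.scalar_commute (X : ℂ[X]) (fun r => (Commute.all _ _)) (f U)).symm
      rw [h2, mul_assoc, hfUU, mul_one]
    · rw [← _root_.map_mul f, ← _root_.map_mul f]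
  rw [Matrix.charpoly, key, det_mul, det_mul, Matrix.charpoly]
  have hdet : (f (U : Matrix m m ℂ)).det * (f (star (U : Matrix m m ℂ))).det = 1 := by
    rw [← det_mul, hfUU, det_one]
  calc (f (U : Matrix m m ℂ)).det * (charmatrix D).det * (f (star (U : Matrix m m ℂ))).det
      = (charmatrix D).det * ((f (U : Matrix m m ℂ)).det * (f (star (U : Matrix m m ℂ))).det) := by
        ring
    _ = (charmatrix D).det := by rw [hdet, mul_one]

lemma charpoly_diagonal' (w : m → ℂ) :
    (Matrix.diagonal w).charpoly = ∏ i, (X - C (w i)) := by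
  rw [Matrix.charpoly, charmatrix]
  have : Matrix.scalar m (X : ℂ[X]) - (C : ℂ →+* ℂ[X]).mapMatrix (Matrix.diagonal w)
      = Matrix.diagonal (fun i => X - C (w i)) := by
    ext i j
    by_cases h : i = j <;>
      simp [Matrix.scalar, h, Matrix.diagonal_apply, RingHom.mapMatrix_apply,
        Matrix.diagonal_apply]
  rw [this, det_diagonal]

lemma eigenvalues_diagonal_multiset (d : m → ℝ)
    (h : (Matrix.diagonal (fun i => (d i : ℂ))).IsHermitian) :
    Multiset.map h.eigenvalues Finset.univ.val = Multiset.map d Finset.univ.val := by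
  have hspec := h.spectral_theorem
  have hcp : (Matrix.diagonal (fun i => (d i : ℂ))).charpoly
      = (Matrix.diagonal (fun i => (h.eigenvalues i : ℂ))).charpoly := by
    conv_lhs => rw [hspec, Unitary.conjStarAlgAut_apply]
    rw [charpoly_unitary_conj']
    congr 1
  rw [charpoly_diagonal', charpoly_diagonal'] at hcp
  have hroots : (Multiset.map (fun i => (d i : ℂ)) Finset.univ.val)
      = (Multiset.map (fun i => (h.eigenvalues i : ℂ)) Finset.univ.val) := by
    have h1 := Polynomial.roots_multiset_prod_X_sub_C
      (Multiset.map (fun i => (d i : ℂ)) Finset.univ.val)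
    have h2 := Polynomial.roots_multiset_prod_X_sub_C
      (Multiset.map (fun i => (h.eigenvalues i : ℂ)) Finset.univ.val)
    simp only [Multiset.map_map, Function.comp_def] at h1 h2
    have : ((Finset.univ.val.map (fun i => ((X : ℂ[X]) - C ((d i : ℂ))))).prod)
        = ((Finset.univ.val.map (fun i => ((X : ℂ[X]) - C ((h.eigenvalues i : ℂ))))).prod) := by
      rw [← Finset.prod_eq_multiset_prod, ← Finset.prod_eq_multiset_prod]
      exact hcp
    rw [← h1, ← h2, this]
  have h3 : Multiset.map (fun x : ℝ => (x : ℂ)) (Finset.univ.val.map d)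
      = Multiset.map (fun x : ℝ => (x : ℂ)) (Finset.univ.val.map h.eigenvalues) := by
    simpa [Multiset.map_map, Function.comp] using hroots
  exact (Multiset.map_injective Complex.ofReal_injective h3).symm

lemma sum_f_eigenvalues_diagonal (d : m → ℝ)
    (h : (Matrix.diagonal (fun i => (d i : ℂ))).IsHermitian) (f : ℝ → ℝ) :
    ∑ i, f (h.eigenvalues i) = ∑ i, f (d i) := by
  have key := eigenvalues_diagonal_multiset d h
  have e1 : ∑ i, f (h.eigenvalues i)
      = ((Finset.univ.val.map h.eigenvalues).map f).sum := by
    rw [Multiset.map_map]; rfl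
  have e2 : ∑ i, f (d i) = ((Finset.univ.val.map d).map f).sum := by
    rw [Multiset.map_map]; rfl
  rw [e1, e2, key]

lemma vnEntropy_diag {ρ : Matrix m m ℂ} (h : ρ.IsHermitian) (d : m → ℝ)
    (hd : ρ = Matrix.diagonal (fun i => (d i : ℂ))) :
    vnEntropy h = -∑ i, d i * Real.log (d i) := by
  subst hd
  exact congrArg Neg.neg
    (sum_f_eigenvalues_diagonal d h (fun x => x * Real.log x))

lemma mexp_one_diag (E : m → ℝ) :
    mexp 1 (Matrix.diagonal (fun i => (E i : ℂ)))
      = Matrix.diagonal (fun i => ((Real.exp (-E i) : ℝ) : ℂ)) := by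
  unfold mexp
  have h1 : ((-(1:ℝ) : ℂ)) • Matrix.diagonal (fun i => (E i : ℂ))
      = Matrix.diagonal (fun i => ((-E i : ℝ) : ℂ)) := by
    ext i j
    by_cases h : i = j <;> simp [Matrix.diagonal_apply, h]
  rw [h1, Matrix.exp_diagonal]
  ext i j
  by_cases h : i = j <;>
    simp [h, Pi.exp_def, ← Complex.exp_eq_exp_ℂ, Complex.ofReal_exp]

lemma gibbs_one_diag (E : m → ℝ) :
    gibbs 1 (Matrix.diagonal (fun i => (E i : ℂ)))
      = Matrix.diagonal
          (fun i => ((Real.exp (-E i) / ∑ j, Real.exp (-E j) : ℝ) : ℂ)) := by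
  have hm := mexp_one_diag E
  have htr : Matrix.trace (mexp 1 (Matrix.diagonal (fun i => (E i : ℂ))))
      = ((∑ j, Real.exp (-E j) : ℝ) : ℂ) := by
    rw [hm, Matrix.trace_diagonal]
    push_cast
    rfl
  unfold gibbs
  rw [htr, hm]
  ext i j
  by_cases h : i = j
  · subst h
    simp [Matrix.diagonal_apply, Matrix.smul_apply]
    ring
  · simp [Matrix.diagonal_apply, h]

lemma trR_diag_mul (a b : m → ℝ) :
    trR (Matrix.diagonal (fun i => (a i : ℂ)) * Matrix.diagonal (fun i => (b i : ℂ)))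
      = ∑ i, a i * b i := by
  rw [Matrix.diagonal_mul_diagonal]
  unfold trR
  rw [Matrix.trace_diagonal]
  rw [Complex.re_sum]
  congr 1
  funext i
  simp [← Complex.ofReal_mul]

lemma gap_pos : ∀ s : ℝ, s ≠ 0 → 0 < s * Real.tanh s - Real.log (Real.cosh s) := by
  have hderiv : ∀ x : ℝ, HasDerivAt
      (fun y => y * Real.tanh y - Real.log (Real.cosh y)) (x / Real.cosh x ^ 2) x := by
    intro x
    have hc : Real.cosh x ≠ 0 := (Real.cosh_pos x).ne'
    have h1 : HasDerivAt (fun y : ℝ => y * Real.sinh y)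
        (Real.sinh x + x * Real.cosh x) x := by
      simpa [add_comm] using (hasDerivAt_id' x).fun_mul (Real.hasDerivAt_sinh x)
    have h2 := h1.div (Real.hasDerivAt_cosh x) hc
    have h3 : HasDerivAt (fun y => Real.log (Real.cosh y))
        (Real.sinh x / Real.cosh x) x := by
      simpa using (Real.hasDerivAt_cosh x).log hc
    have h4 := h2.sub h3
    have heq : ((Real.sinh x + x * Real.cosh x) * Real.cosh x
          - x * Real.sinh x * Real.sinh x) / Real.cosh x ^ 2
        - Real.sinh x / Real.cosh x = x / Real.cosh x ^ 2 := by
      have hsq := Real.cosh_sq_sub_sinh_sq x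
      field_simp
      linear_combination x * hsq
    rw [heq] at h4
    convert h4 using 2 with y
    case e'_4 => rfl
    case e'_5 => rfl
    simp only [Real.tanh_eq_sinh_div_cosh, Pi.sub_apply, Pi.div_apply, mul_div_assoc]
  have hmono : StrictMonoOn (fun y : ℝ => y * Real.tanh y - Real.log (Real.cosh y))
      (Set.Ici 0) := by
    apply strictMonoOn_of_deriv_pos (convex_Ici 0)
    · exact Continuous.continuousOn (continuous_iff_continuousAt.2
        (fun x => (hderiv x).differentiableAt.continuousAt))
    · intro x hx
      rw [interior_Ici] at hx
      rw [(hderiv x).deriv]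
      exact div_pos hx (pow_pos (Real.cosh_pos x) 2)
  have key : ∀ s : ℝ, 0 < s → 0 < s * Real.tanh s - Real.log (Real.cosh s) := by
    intro s hs
    have := hmono (Set.self_mem_Ici) (Set.mem_Ici.2 hs.le) hs
    simpa using this
  intro s hs
  rcases lt_or_gt_of_ne hs with h | h
  · have := key (-s) (by linarith)
    simpa [Real.tanh_neg, Real.cosh_neg, mul_comm] using this
  · exact key s h

end Aux

/-- The energy levels of `twoQubitH t`. -/
noncomputable def Efun (t : ℝ) : Fin 2 × Fin 2 → ℝ := fun p =>
  (if p.1 = 0 then (1:ℝ) else -1) * (if p.2 = 0 then (1:ℝ) else -1)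
    + t * (if p.2 = 0 then (1:ℝ) else -1)

lemma twoQubitH_diag (t : ℝ) :
    twoQubitH t = Matrix.diagonal (fun p => ((Efun t p : ℝ) : ℂ)) := by
  ext ⟨i, j⟩ ⟨k, l⟩
  fin_cases i <;> fin_cases j <;> fin_cases k <;> fin_cases l <;>
    simp [twoQubitH, pauliZ, Efun, Matrix.diagonal_apply, Matrix.kroneckerMap_apply,
      Matrix.one_apply, Prod.ext_iff] <;> push_cast <;> ring

/-- Work gap in the local two-qubit example: for `0 < t ≤ t_c` and `β = 1`,
`ΔF(ω_t, σ_z⊗σ_z) = t tanh t - log cosh t`, and this quantity is strictly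
positive for all `t ≠ 0`. -/
theorem two_qubit_work_gap (t tc : ℝ) (ht0 : 0 < t) (htle : t ≤ tc)
    (htc : Real.tanh tc = (Real.exp 2 - 1) / (2 * Real.exp 2))
    (h1 : (gibbs 1 (twoQubitH t)).IsHermitian)
    (h2 : (gibbs 1 (twoQubitH 0)).IsHermitian) :
    freeEnergy 1 (gibbs 1 (twoQubitH t)) (twoQubitH 0) h1 -
        freeEnergy 1 (gibbs 1 (twoQubitH 0)) (twoQubitH 0) h2 =
      t * Real.tanh t - Real.log (Real.cosh t) ∧
    ∀ s : ℝ, s ≠ 0 → 0 < s * Real.tanh s - Real.log (Real.cosh s) := by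
  refine ⟨?_, gap_pos⟩
  -- notation
  have hexp : ∀ u : ℝ, gibbs 1 (twoQubitH u)
      = Matrix.diagonal (fun i =>
          ((Real.exp (-(Efun u i)) / ∑ j, Real.exp (-(Efun u j)) : ℝ) : ℂ)) := by
    intro u
    rw [twoQubitH_diag u, gibbs_one_diag]
  set put : (Fin 2 × Fin 2) → ℝ :=
    fun i => Real.exp (-(Efun t i)) / ∑ j, Real.exp (-(Efun t j)) with hput
  set pu0 : (Fin 2 × Fin 2) → ℝ :=
    fun i => Real.exp (-(Efun 0 i)) / ∑ j, Real.exp (-(Efun 0 j)) with hpu0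
  have hSt := vnEntropy_diag h1 put (hexp t)
  have hS0 := vnEntropy_diag h2 pu0 (hexp 0)
  have hTt : trR (gibbs 1 (twoQubitH t) * twoQubitH 0) = ∑ i, put i * Efun 0 i := by
    rw [hexp t, twoQubitH_diag 0, trR_diag_mul]
  have hT0 : trR (gibbs 1 (twoQubitH 0) * twoQubitH 0) = ∑ i, pu0 i * Efun 0 i := by
    rw [hexp 0, twoQubitH_diag 0, trR_diag_mul]
  unfold freeEnergy
  rw [hSt, hS0, hTt, hT0]
  have hEa : ∀ u : ℝ, Efun u (0,0) = 1 + u := by intro u; simp [Efun]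
  have hEb : ∀ u : ℝ, Efun u (0,1) = -1 - u := by intro u; simp [Efun]; ring
  have hEc : ∀ u : ℝ, Efun u (1,0) = -1 + u := by intro u; simp [Efun]
  have hEd : ∀ u : ℝ, Efun u (1,1) = 1 - u := by intro u; simp [Efun]; ring
  have hE0a : Efun (0:ℝ) (0,0) = 1 := by simp [Efun]
  have hE0b : Efun (0:ℝ) (0,1) = -1 := by simp [Efun]
  have hE0c : Efun (0:ℝ) (1,0) = -1 := by simp [Efun]
  have hE0d : Efun (0:ℝ) (1,1) = 1 := by simp [Efun]
  simp only [Fintype.sum_prod_type, Fin.sum_univ_two, hput, hpu0, hE0a, hE0b, hE0c, hE0d]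
  simp only [hEa, hEb, hEc, hEd]
  rw [show (-(-1:ℝ)) = 1 by norm_num]
  have hZsum : Real.exp (-(1 + t)) + Real.exp (-(-1 - t))
        + (Real.exp (-(-1 + t)) + Real.exp (-(1 - t)))
      = 4 * Real.cosh 1 * Real.cosh t := by
    rw [Real.cosh_eq, Real.cosh_eq,
      show (-(1 + t)) = -1 + -t by ring, show (-(-1 - t)) = 1 + t by ring,
      show (-(-1 + t)) = 1 + -t by ring, show (-(1 - t)) = -1 + t by ring,
      Real.exp_add, Real.exp_add, Real.exp_add, Real.exp_add]
    ring
  have hZ0sum : Real.exp (-1) + Real.exp 1 + (Real.exp 1 + Real.exp (-1))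
      = 4 * Real.cosh 1 := by
    rw [Real.cosh_eq]; ring
  rw [hZsum, hZ0sum]
  have hc1 : (0:ℝ) < 4 * Real.cosh 1 := by positivity
  have hct : (0:ℝ) < Real.cosh t := Real.cosh_pos t
  have hZt : (0:ℝ) < 4 * Real.cosh 1 * Real.cosh t := by positivity
  have hlogdiv : ∀ e Z : ℝ, 0 < Z → Real.log (Real.exp e / Z) = e - Real.log Z := by
    intro e Z hZ
    rw [Real.log_div (Real.exp_ne_zero _) hZ.ne', Real.log_exp]
  rw [hlogdiv _ _ hZt, hlogdiv _ _ hZt, hlogdiv _ _ hZt, hlogdiv _ _ hZt,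
    hlogdiv _ _ hc1, hlogdiv _ _ hc1]
  rw [Real.log_mul hc1.ne' hct.ne']
  rw [Real.tanh_eq_sinh_div_cosh]
  rw [Real.cosh_eq t, Real.sinh_eq t, Real.cosh_eq 1]
  rw [show (-(1 + t)) = -1 + -t by ring, show (-(-1 - t)) = 1 + t by ring,
    show (-(-1 + t)) = 1 + -t by ring, show (-(1 - t)) = -1 + t by ring,
    Real.exp_add, Real.exp_add, Real.exp_add, Real.exp_add]
  rw [Real.exp_neg 1, Real.exp_neg t]
  have h1 : Real.exp 1 ≠ 0 := Real.exp_ne_zero 1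
  have h2 : Real.exp t ≠ 0 := Real.exp_ne_zero t
  have h3 : Real.exp 1 * Real.exp t + (Real.exp 1 * Real.exp t)⁻¹ ≠ 0 := by positivity
  field_simp
  ring
end
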